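/- If P is odd and Q ≡ 1 (mod 4), then U_17(P,Q) ≡ 3 (mod 4), hence U_17(P,Q) is not a perfect square. -/
import Mathlib


def lucasU (P Q : ℤ) : ℕ → ℤ
  | 0 => 0
  | 1 => 1
  | (n + 2) => P * lucasU P Q (n + 1) - Q * lucasU P Q n

lemma lucasU_cong (P Q P' Q' : ℤ) (hP : P ≡ P' [ZMOD 4]) (hQ : Q ≡ Q' [ZMOD 4]) :
    ∀ n, lucasU P Q n ≡ lucasU P' Q' n [ZMOD 4] := by
  intro n
  induction n using Nat.strong_induction_on with
  | _ n ih =>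
    match n with
    | 0 => rfl
    | 1 => rfl
    | (m + 2) =>
      have h1 := ih (m + 1) (by omega)
      have h2 := ih m (by omega)
      simpa [lucasU] using (hP.mul h1).sub (hQ.mul h2)

theorem stmt18 (P Q : ℤ) (hP : Odd P) (hQ4 : Q % 4 = 1) :
    lucasU P Q 17 ≡ 3 [ZMOD 4] ∧ ¬ ∃ k : ℤ, lucasU P Q 17 = k ^ 2 := by
  have hPm : P % 4 = 1 ∨ P % 4 = 3 := by
    obtain ⟨k, hk⟩ := hP; omega
  have hQc : Q ≡ 1 [ZMOD 4] := by
    show Q % 4 = 1 % 4; omega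
  have hmain : lucasU P Q 17 ≡ 3 [ZMOD 4] := by
    rcases hPm with h | h
    · have hPc : P ≡ 1 [ZMOD 4] := by show P % 4 = 1 % 4; omega
      have := lucasU_cong P Q 1 1 hPc hQc 17
      have hv : lucasU 1 1 17 = -1 := by norm_num [lucasU]
      rw [hv] at this
      exact this.trans (by decide)
    · have hPc : P ≡ 3 [ZMOD 4] := by show P % 4 = 3 % 4; omega
      have := lucasU_cong P Q 3 1 hPc hQc 17
      have hv : lucasU 3 1 17 = 5702887 := by norm_num [lucasU]
      rw [hv] at this
      exact this.trans (by decide)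
  refine ⟨hmain, ?_⟩
  rintro ⟨k, hk⟩
  have h3 : lucasU P Q 17 % 4 = 3 := by
    have : lucasU P Q 17 % 4 = 3 % 4 := hmain
    omega
  rcases Int.even_or_odd k with ⟨m, hm⟩ | ⟨m, hm⟩ <;>
    (subst hm; rw [hk] at h3; ring_nf at h3; omega)
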